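/- arXiv:1503.08418 — 2 statements merged into one kernel-verified Lean document; each statement's English description precedes it below -/
import Mathlib

section
/- For all n ≥ 0, the degenerate poly-Bernoulli polynomials of index k = 2 satisfy β_n^{(2)}(x|λ) = β_n(x|λ) − (n/4) β_{n−1}(x|λ) + Σ_{l=2}^{n} C(n,l) (B_l/(l+1)) β_{n−l}(x|λ), where B_l are the Bernoulli numbers (with the convention that the middle term is absent when n = 0). -/
open Finset PowerSeries

/-- The generalized falling factorial `(x|λ)ₙ = x(x−λ)(x−2λ)⋯(x−(n−1)λ)`. -/
noncomputable def genFall (lam x : ℂ) (n : ℕ) : ℂ :=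
  ∏ i ∈ Finset.range n, (x - (i : ℂ) * lam)

/-- The formal power series `(1+λt)^{x/λ} = Σ_{n≥0} (x|λ)ₙ tⁿ/n!`. -/
noncomputable def degExp (lam x : ℂ) : PowerSeries ℂ :=
  PowerSeries.mk fun n => genFall lam x n / (n.factorial : ℂ)

/-- The formal power series `1 - e^{-t}`. -/
noncomputable def oneSubExpNeg : PowerSeries ℂ :=
  PowerSeries.mk fun n => if n = 0 then 0 else -((-1 : ℂ) ^ n) / (n.factorial : ℂ)

/-- The formal power series `Li_k(1 - e^{-t}) = Σ_{n≥1} (1-e^{-t})ⁿ/nᵏ`; since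
`(1-e^{-t})ⁿ` has order at least `n`, the coefficient of `tˡ` only involves `n ≤ l`. -/
noncomputable def polyLogComp (k : ℤ) : PowerSeries ℂ :=
  PowerSeries.mk fun l =>
    ∑ n ∈ Finset.Icc 1 l, ((n : ℂ) ^ k)⁻¹ * PowerSeries.coeff (R := ℂ) l (oneSubExpNeg ^ n)

/-- Stirling numbers of the second kind `S₂(n, k)`. -/
def S2 : ℕ → ℕ → ℕ
  | 0, 0 => 1
  | 0, _ + 1 => 0
  | _ + 1, 0 => 0
  | n + 1, k + 1 => (k + 1) * S2 n (k + 1) + S2 n k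

noncomputable def Einv : PowerSeries ℂ := PowerSeries.evalNegHom (exp ℂ)

lemma coeff_Einv (n : ℕ) : coeff (R := ℂ) n Einv = (-1 : ℂ) ^ n / n.factorial := by
  simp [Einv, evalNegHom, coeff_rescale, coeff_exp, div_eq_mul_inv]

lemma hF : oneSubExpNeg = 1 - Einv := by
  ext n
  rw [map_sub, coeff_Einv]
  cases n with
  | zero => simp [oneSubExpNeg]
  | succ m => simp [oneSubExpNeg, coeff_one, neg_div]

lemma hDF : d⁄dX ℂ oneSubExpNeg = Einv := by
  ext n
  rw [PowerSeries.coeff_derivative, coeff_Einv]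
  simp only [oneSubExpNeg, coeff_mk, Nat.succ_ne_zero, if_false, Nat.factorial_succ]
  push_cast
  have h1 : ((n.factorial : ℂ)) ≠ 0 := Nat.cast_ne_zero.2 n.factorial_ne_zero
  have h2 : ((n : ℂ) + 1) ≠ 0 := Nat.cast_add_one_ne_zero n
  field_simp
  ring

noncomputable def T (k : ℤ) (N : ℕ) : PowerSeries ℂ :=
  ∑ n ∈ Finset.Icc 1 N, PowerSeries.C (R := ℂ) (((n : ℂ) ^ k)⁻¹) * oneSubExpNeg ^ n

lemma coeff_pow_F_zero {m n : ℕ} (h : m < n) : coeff (R := ℂ) m (oneSubExpNeg ^ n) = 0 := by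
  have hX : (X : ℂ⟦X⟧) ∣ oneSubExpNeg := X_dvd_iff.2 (by
    simp [oneSubExpNeg, ← coeff_zero_eq_constantCoeff])
  exact (X_pow_dvd_iff.1 (pow_dvd_pow_of_dvd hX n)) m h

lemma coeff_mul_pow_F_zero (g : ℂ⟦X⟧) {l N : ℕ} (h : l < N) :
    coeff (R := ℂ) l (g * oneSubExpNeg ^ N) = 0 := by
  rw [coeff_mul]
  apply Finset.sum_eq_zero
  intro p hp
  have hp2 : p.2 < N := by
    have := Finset.HasAntidiagonal.mem_antidiagonal.1 hp; omega
  rw [coeff_pow_F_zero hp2, mul_zero]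

lemma coeff_polyLog (k : ℤ) {l N : ℕ} (h : l ≤ N) :
    coeff (R := ℂ) l (polyLogComp k) = coeff (R := ℂ) l (T k N) := by
  rw [polyLogComp, coeff_mk, T, map_sum]
  rw [Finset.sum_subset (Finset.Icc_subset_Icc_right h)]
  · exact Finset.sum_congr rfl fun n _ => (coeff_C_mul _ _ _).symm
  · intro m hm hml
    simp only [Finset.mem_Icc] at hm hml
    rw [coeff_pow_F_zero (by omega), mul_zero]

lemma deriv_term (c : ℂ) (n : ℕ) :
    d⁄dX ℂ (PowerSeries.C (R := ℂ) c * oneSubExpNeg ^ n)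
      = PowerSeries.C (R := ℂ) (c * n) * oneSubExpNeg ^ (n - 1) * Einv := by
  rw [Derivation.leibniz, derivative_C, smul_zero, add_zero, Derivation.leibniz_pow, hDF]
  simp only [smul_eq_mul, nsmul_eq_mul]
  rw [map_mul, map_natCast]
  ring

lemma derivT1 (N : ℕ) :
    d⁄dX ℂ (T 1 N) = Einv * ∑ m ∈ Finset.range N, oneSubExpNeg ^ m := by
  rw [T, map_sum, Finset.mul_sum, ← Finset.Ico_add_one_right_eq_Icc, Finset.sum_Ico_eq_sum_range]
  apply Finset.sum_congr (by norm_num)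
  intro i _
  rw [deriv_term]
  have h1 : ((1 + i : ℕ) : ℂ) ≠ 0 := Nat.cast_ne_zero.2 (by omega)
  have : (((1 + i : ℕ) : ℂ) ^ (1 : ℤ))⁻¹ * ((1 + i : ℕ) : ℂ) = 1 := by
    rw [zpow_one]
    push_cast at h1 ⊢
    field_simp
  rw [this, map_one, one_mul, Nat.add_sub_cancel_left]
  ring

lemma derivT2 (N : ℕ) :
    d⁄dX ℂ (T 2 N) * oneSubExpNeg = Einv * T 1 N := by
  rw [T, T, map_sum, Finset.sum_mul, Finset.mul_sum]
  apply Finset.sum_congr rfl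
  intro n hn
  have hn1 : 1 ≤ n := (Finset.mem_Icc.1 hn).1
  rw [deriv_term]
  have h1 : ((n : ℕ) : ℂ) ≠ 0 := Nat.cast_ne_zero.2 (by omega)
  have h2 : ((n : ℂ) ^ (2 : ℤ))⁻¹ * (n : ℂ) = ((n : ℂ) ^ (1 : ℤ))⁻¹ := by
    rw [zpow_one, zpow_two]; field_simp
  rw [h2]
  have h3 : oneSubExpNeg ^ (n - 1) * oneSubExpNeg = oneSubExpNeg ^ n := by
    rw [← pow_succ]; congr 1; omega
  calc PowerSeries.C (R := ℂ) (((n : ℂ) ^ (1:ℤ))⁻¹) * oneSubExpNeg ^ (n-1) * Einv * oneSubExpNeg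
      = Einv * (PowerSeries.C (R := ℂ) (((n : ℂ) ^ (1:ℤ))⁻¹) * (oneSubExpNeg ^ (n-1) * oneSubExpNeg)) := by ring
    _ = _ := by rw [h3]

lemma geomF (N : ℕ) :
    (∑ m ∈ Finset.range N, oneSubExpNeg ^ m) * (1 - oneSubExpNeg) = 1 - oneSubExpNeg ^ N := by
  have h := geom_sum_mul oneSubExpNeg N
  linear_combination -h

lemma one_sub_F : (1 : ℂ⟦X⟧) - oneSubExpNeg = Einv := by rw [hF]; ring

lemma Einv_ne : (Einv : ℂ⟦X⟧) ≠ 0 := fun h => by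
  have := coeff_Einv 0
  rw [h] at this
  simp at this

lemma DL1 : d⁄dX ℂ (polyLogComp 1) = 1 := by
  have key : d⁄dX ℂ (polyLogComp 1) * Einv = 1 * Einv := by
    ext l
    have e1 : coeff (R := ℂ) l (d⁄dX ℂ (polyLogComp 1) * Einv)
        = coeff (R := ℂ) l (d⁄dX ℂ (T 1 (l+1)) * Einv) := by
      rw [coeff_mul, coeff_mul]
      apply Finset.sum_congr rfl
      intro p hp
      have hp1 : p.1 ≤ l := by have := Finset.HasAntidiagonal.mem_antidiagonal.1 hp; omega
      rw [coeff_derivative, coeff_derivative, coeff_polyLog 1 (by omega : p.1 + 1 ≤ l + 1)]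
    rw [e1, ← one_sub_F, derivT1, mul_assoc, geomF]
    rw [mul_sub, mul_one, map_sub, coeff_mul_pow_F_zero _ (by omega), one_mul, one_sub_F,
      sub_zero]
  exact mul_right_cancel₀ Einv_ne key

lemma coeff_polyLog_zero (k : ℤ) : coeff (R := ℂ) 0 (polyLogComp k) = 0 := by
  simp [polyLogComp]

lemma L1_eq : polyLogComp 1 = X := by
  apply PowerSeries.derivative.ext (R := ℂ) (DL1.trans derivative_X.symm)
  rw [← coeff_zero_eq_constantCoeff_apply, ← coeff_zero_eq_constantCoeff_apply,
    coeff_polyLog_zero, coeff_X]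
  simp

lemma DL2_mul : d⁄dX ℂ (polyLogComp 2) * oneSubExpNeg = Einv * X := by
  ext l
  have e1 : coeff (R := ℂ) l (d⁄dX ℂ (polyLogComp 2) * oneSubExpNeg)
      = coeff (R := ℂ) l (d⁄dX ℂ (T 2 (l+1)) * oneSubExpNeg) := by
    rw [coeff_mul, coeff_mul]
    apply Finset.sum_congr rfl
    intro p hp
    have hp1 : p.1 ≤ l := by have := Finset.HasAntidiagonal.mem_antidiagonal.1 hp; omega
    rw [coeff_derivative, coeff_derivative, coeff_polyLog 2 (by omega : p.1 + 1 ≤ l + 1)]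
  rw [e1, derivT2, coeff_mul, coeff_mul]
  apply Finset.sum_congr rfl
  intro p hp
  have hp2 : p.2 ≤ l := by have := Finset.HasAntidiagonal.mem_antidiagonal.1 hp; omega
  rw [← coeff_polyLog 1 (by omega : p.2 ≤ l + 1), L1_eq]

lemma exp_sub_one_ne : (exp ℂ - 1 : ℂ⟦X⟧) ≠ 0 := fun h => by
  have : coeff (R := ℂ) 1 (exp ℂ - 1 : ℂ⟦X⟧) = 1 := by
    rw [map_sub, coeff_exp]
    simp
  rw [h] at this
  simp at this

lemma F_factor : oneSubExpNeg = Einv * (exp ℂ - 1) := by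
  have h : Einv * exp ℂ = 1 := by
    rw [mul_comm]; exact PowerSeries.exp_mul_exp_neg_eq_one
  rw [mul_sub, h, mul_one, hF]

lemma DL2 : d⁄dX ℂ (polyLogComp 2) = bernoulliPowerSeries ℂ := by
  have key : d⁄dX ℂ (polyLogComp 2) * (exp ℂ - 1) = bernoulliPowerSeries ℂ * (exp ℂ - 1) := by
    rw [bernoulliPowerSeries_mul_exp_sub_one]
    apply mul_left_cancel₀ Einv_ne
    calc Einv * (d⁄dX ℂ (polyLogComp 2) * (exp ℂ - 1))
        = d⁄dX ℂ (polyLogComp 2) * (Einv * (exp ℂ - 1)) := by ring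
      _ = Einv * X := by rw [← F_factor, DL2_mul]
  exact mul_right_cancel₀ exp_sub_one_ne key

lemma coeff_L2 (m : ℕ) :
    coeff (R := ℂ) (m + 1) (polyLogComp 2)
      = ((bernoulli m : ℚ) : ℂ) / ((m : ℂ) + 1) / (m.factorial : ℂ) := by
  have h := congrArg (coeff (R := ℂ) m) DL2
  rw [coeff_derivative] at h
  have hb : coeff (R := ℂ) m (bernoulliPowerSeries ℂ) = ((bernoulli m : ℚ) : ℂ) / (m.factorial : ℂ) := by
    rw [bernoulliPowerSeries, coeff_mk]
    push_cast
    simp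
  rw [hb] at h
  have h1 : ((m : ℂ) + 1) ≠ 0 := Nat.cast_add_one_ne_zero m
  have h2 : ((m.factorial : ℂ)) ≠ 0 := Nat.cast_ne_zero.2 m.factorial_ne_zero
  field_simp at h ⊢
  linear_combination h

noncomputable def G : ℂ⟦X⟧ :=
  PowerSeries.mk fun l => ((bernoulli l : ℚ) : ℂ) / ((l : ℂ) + 1) / (l.factorial : ℂ)

lemma polyLog2_eq : polyLogComp 2 = X * G := by
  ext m
  cases m with
  | zero => rw [coeff_polyLog_zero, coeff_zero_X_mul]
  | succ m => rw [coeff_L2, coeff_succ_X_mul, G, coeff_mk]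

lemma degExp_sub_one_ne (lam : ℂ) : degExp lam 1 - 1 ≠ 0 := fun h => by
  have : coeff (R := ℂ) 1 (degExp lam 1 - 1) = 1 := by
    rw [map_sub, degExp, coeff_mk]
    simp [genFall]
  rw [h] at this
  simp at this

/-- `βₙ⁽²⁾(x|λ) = βₙ(x|λ) − (n/4) β_{n−1}(x|λ)
+ Σ_{l=2}^{n} C(n,l) (B_l/(l+1)) β_{n−l}(x|λ)` (the middle term is absent when `n = 0`,
corresponding to the factor `n = 0`). -/
theorem degenerate_poly_bernoulli_two_formula' (lam : ℂ) (β2 β : ℕ → ℂ → ℂ)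
    (hβ2 : ∀ x : ℂ,
      (PowerSeries.mk fun n => β2 n x / (n.factorial : ℂ)) * (degExp lam 1 - 1)
        = polyLogComp 2 * degExp lam x)
    (hβ : ∀ x : ℂ,
      (PowerSeries.mk fun n => β n x / (n.factorial : ℂ)) * (degExp lam 1 - 1)
        = PowerSeries.X * degExp lam x)
    (n : ℕ) (x : ℂ) :
    β2 n x = β n x - (n : ℂ) / 4 * β (n - 1) x
      + ∑ l ∈ Finset.Icc 2 n,
          (n.choose l : ℂ) * (((bernoulli l : ℚ) : ℂ) / ((l : ℂ) + 1)) * β (n - l) x := by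
  have hser : (PowerSeries.mk fun m => β2 m x / (m.factorial : ℂ))
      = G * PowerSeries.mk fun m => β m x / (m.factorial : ℂ) := by
    apply mul_right_cancel₀ (degExp_sub_one_ne lam)
    rw [hβ2 x, polyLog2_eq, mul_assoc G, hβ x]
    ring
  have hco := congrArg (coeff (R := ℂ) n) hser
  rw [coeff_mk, coeff_mul, Finset.Nat.sum_antidiagonal_eq_sum_range_succ_mk] at hco
  simp only [G, coeff_mk] at hco
  have hfn : ((n.factorial : ℂ)) ≠ 0 := Nat.cast_ne_zero.2 n.factorial_ne_zero
  have key : β2 n x = ∑ l ∈ Finset.range (n + 1),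
      (n.choose l : ℂ) * (((bernoulli l : ℚ) : ℂ) / ((l : ℂ) + 1)) * β (n - l) x := by
    have h2 : β2 n x = (n.factorial : ℂ) * ∑ l ∈ Finset.range (n + 1),
        ((bernoulli l : ℚ) : ℂ) / ((l : ℂ) + 1) / (l.factorial : ℂ)
          * (β (n - l) x / ((n - l).factorial : ℂ)) := by
      rw [← hco, mul_div_cancel₀ _ hfn]
    rw [h2, Finset.mul_sum]
    apply Finset.sum_congr rfl
    intro l hl
    have hln : l ≤ n := by
      simp only [Finset.mem_range] at hl; omega
    have hch : (n.choose l : ℂ) * (l.factorial : ℂ) * ((n - l).factorial : ℂ)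
        = (n.factorial : ℂ) := by
      exact_mod_cast congrArg (Nat.cast : ℕ → ℂ) (Nat.choose_mul_factorial_mul_factorial hln)
    have h3 : ((l.factorial : ℂ)) ≠ 0 := Nat.cast_ne_zero.2 l.factorial_ne_zero
    have h4 : (((n - l).factorial : ℂ)) ≠ 0 := Nat.cast_ne_zero.2 (n - l).factorial_ne_zero
    have h5 : ((l : ℂ) + 1) ≠ 0 := Nat.cast_add_one_ne_zero l
    field_simp
    linear_combination (-(((bernoulli l : ℚ) : ℂ) * β (n - l) x)) * hch
  cases n with
  | zero =>
    simp only [key]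
    simp
  | succ m =>
    have hset : Finset.range (m + 2) = insert 0 (insert 1 (Finset.Icc 2 (m + 1))) := by
      ext a
      simp only [Finset.mem_range, Finset.mem_insert, Finset.mem_Icc]
      omega
    rw [key, hset, Finset.sum_insert (by simp), Finset.sum_insert (by simp)]
    simp only [Nat.choose_zero_right, Nat.choose_one_right, bernoulli_zero, bernoulli_one,
      Nat.sub_zero, Nat.succ_sub_one, Nat.cast_one, Nat.cast_succ]
    push_cast
    ring
end

section
/- As formal power series in t, one has (1/t)·Li_k(1−e^{−t}) = Σ_{l≥0} ( Σ_{p=1}^{l+1} ((−1)^{p+l+1}/p^k) · p! · S_2(l+1,p)/(l+1) ) · t^l/l!, where S_2(m,p) denotes the Stirling numbers of the second kind. -/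
open Finset

lemma fact_cast (j : ℕ) : (((j + 1).factorial : ℂ)) = ((j : ℂ) + 1) * (j.factorial : ℂ) := by
  rw [Nat.factorial_succ]; push_cast; ring

lemma deriv_oneSubExpNeg :
    PowerSeries.derivative ℂ oneSubExpNeg = 1 - oneSubExpNeg := by
  ext n
  rw [PowerSeries.coeff_derivative]
  simp only [oneSubExpNeg, PowerSeries.coeff_mk, map_sub, PowerSeries.coeff_one]
  cases n with
  | zero => simp
  | succ m =>
    have h1 : ((m.factorial : ℂ)) ≠ 0 := Nat.cast_ne_zero.2 m.factorial_ne_zero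
    have h2 : ((m : ℂ) + 1) ≠ 0 := Nat.cast_add_one_ne_zero m
    have h3 : ((m : ℂ) + 1 + 1) ≠ 0 := by
      have := Nat.cast_add_one_ne_zero (R := ℂ) (m + 1); push_cast at this; exact this
    simp only [Nat.succ_ne_zero, if_false, fact_cast]
    push_cast
    rw [pow_succ, pow_succ]
    field_simp
    ring

lemma coeff_pow_oneSubExpNeg (l n : ℕ) :
    PowerSeries.coeff (R := ℂ) l (oneSubExpNeg ^ n)
      = (-1 : ℂ) ^ (n + l) * (n.factorial : ℂ) * (S2 l n : ℂ) / (l.factorial : ℂ) := by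
  induction l generalizing n with
  | zero =>
    rw [PowerSeries.coeff_zero_eq_constantCoeff, map_pow]
    have : PowerSeries.constantCoeff (R := ℂ) oneSubExpNeg = 0 := by
      simp [oneSubExpNeg, PowerSeries.constantCoeff_mk]
    rw [this]
    cases n with
    | zero => simp [S2]
    | succ m => simp [S2, zero_pow]
  | succ l ih =>
    cases n with
    | zero => simp [S2]
    | succ m =>
      have hD : PowerSeries.derivative ℂ (oneSubExpNeg ^ (m + 1))
          = PowerSeries.C (R := ℂ) ((m : ℂ) + 1) * (oneSubExpNeg ^ m - oneSubExpNeg ^ (m + 1)) := by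
        have h := Derivation.leibniz_pow (PowerSeries.derivative ℂ) (a := oneSubExpNeg) (m + 1)
        rw [h, deriv_oneSubExpNeg]
        simp only [Nat.add_sub_cancel, smul_eq_mul, nsmul_eq_mul]
        push_cast
        rw [show ((m : PowerSeries ℂ) + 1) = PowerSeries.C (R := ℂ) ((m : ℂ) + 1) by
          simp [map_add, map_natCast]]
        ring
      have hc := PowerSeries.coeff_derivative (oneSubExpNeg ^ (m + 1)) l
      rw [hD] at hc
      simp only [PowerSeries.coeff_C_mul, map_sub, mul_sub] at hc
      rw [← mul_sub] at hc
      have hl1 : ((l : ℂ) + 1) ≠ 0 := Nat.cast_add_one_ne_zero l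
      have key : PowerSeries.coeff (R := ℂ) (l + 1) (oneSubExpNeg ^ (m + 1))
          = ((m : ℂ) + 1) * (PowerSeries.coeff (R := ℂ) l (oneSubExpNeg ^ m)
              - PowerSeries.coeff (R := ℂ) l (oneSubExpNeg ^ (m + 1))) / ((l : ℂ) + 1) := by
        rw [eq_div_iff hl1]
        exact hc.symm
      rw [key, ih m, ih (m + 1)]
      have hS : (S2 (l + 1) (m + 1) : ℂ) = ((m : ℂ) + 1) * (S2 l (m + 1) : ℂ) + (S2 l m : ℂ) := by
        have : S2 (l + 1) (m + 1) = (m + 1) * S2 l (m + 1) + S2 l m := rfl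
        rw [this]; push_cast; ring
      simp only [hS, fact_cast]
      have hlf : ((l.factorial : ℂ)) ≠ 0 := Nat.cast_ne_zero.2 l.factorial_ne_zero
      field_simp
      ring

/-- `(1/t)·Li_k(1−e^{−t}) = Σ_{l≥0} (Σ_{p=1}^{l+1}
((−1)^{p+l+1}/pᵏ)·p!·S₂(l+1,p)/(l+1)) tˡ/l!`, stated multiplicatively as
`Li_k(1−e^{−t}) = t · Σ_{l≥0} c_l tˡ/l!`. -/
theorem polyLog_one_sub_exp_neg_eq (k : ℤ) :
    polyLogComp k = PowerSeries.X * PowerSeries.mk (fun l =>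
      (∑ p ∈ Finset.Icc 1 (l + 1),
          (-1 : ℂ) ^ (p + l + 1) / (p : ℂ) ^ k * (p.factorial : ℂ)
            * (S2 (l + 1) p : ℂ) / ((l : ℂ) + 1)) / (l.factorial : ℂ)) := by
  ext j
  rw [polyLogComp, PowerSeries.coeff_mk]
  cases j with
  | zero => simp
  | succ l =>
    rw [PowerSeries.coeff_succ_X_mul, PowerSeries.coeff_mk, div_eq_mul_inv, Finset.sum_mul]
    refine Finset.sum_congr rfl fun p hp => ?_
    have hp1 : 1 ≤ p := (Finset.mem_Icc.1 hp).1
    have hpc : (p : ℂ) ≠ 0 := Nat.cast_ne_zero.2 (by omega)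
    have hpk : ((p : ℂ) ^ k) ≠ 0 := zpow_ne_zero k hpc
    rw [coeff_pow_oneSubExpNeg, fact_cast]
    have hl1 : ((l : ℂ) + 1) ≠ 0 := Nat.cast_add_one_ne_zero l
    have hlf : ((l.factorial : ℂ)) ≠ 0 := Nat.cast_ne_zero.2 l.factorial_ne_zero
    have : p + (l + 1) = p + l + 1 := by omega
    rw [this]
    field_simp
end
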